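/- Let α be a type, G a group, E a group equipped with a left action ▷ of G by group automorphisms, and φ : FreeGroup α → G a group homomorphism. Then for every function v : α → E there exists a unique φ-derivation d : FreeGroup α → E such that d(of a) = v(a) for all a ∈ α, where 'of' denotes the canonical inclusion of generators into the free group. In particular, any φ-derivation on a free group is uniquely determined by its values on the free generators, and any assignment of values on the generators extends to a φ-derivation. -/

import Mathlib

section Aux

variable {α G E : Type*} [Group G] [Group E] [MulDistribMulAction G E]
  (φ : FreeGroup α →* G)

private lemma fgDeriv_one {d : FreeGroup α → E}
    (hc : ∀ x y : FreeGroup α, d (x * y) = ((φ y)⁻¹ • d x) * d y) : d 1 = 1 := by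
  simpa using hc 1 1

private lemma fgDeriv_inv {d : FreeGroup α → E}
    (hc : ∀ x y : FreeGroup α, d (x * y) = ((φ y)⁻¹ • d x) * d y) (x : FreeGroup α) :
    d x⁻¹ = (φ x • d x)⁻¹ := by
  have h := hc x x⁻¹
  rw [mul_inv_cancel, fgDeriv_one φ hc] at h
  simp only [map_inv, inv_inv] at h
  exact eq_inv_of_mul_eq_one_right h.symm

end Aux

/-- Let `G` be a group, `E` a group with a left action of `G` by group
automorphisms, and `φ : FreeGroup α →* G` a group homomorphism.  Any
assignment `v : α → E` of values on the free generators extends uniquely to a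
`φ`-derivation `d : FreeGroup α → E` with `d (FreeGroup.of a) = v a`. -/
theorem freeGroup_derivation_exists_unique {α G E : Type*} [Group G] [Group E]
    [MulDistribMulAction G E] (φ : FreeGroup α →* G) (v : α → E) :
    ∃! d : FreeGroup α → E,
      (∀ x y : FreeGroup α, d (x * y) = ((φ y)⁻¹ • d x) * d y) ∧
      (∀ a : α, d (FreeGroup.of a) = v a) := by
  classical
  set A : G →* MulAut E := MulDistribMulAction.toMulAut G E with hA
  set F : FreeGroup α →* E ⋊[A] G :=
    FreeGroup.lift (fun a => (⟨φ (FreeGroup.of a) • v a, φ (FreeGroup.of a)⟩ : E ⋊[A] G))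
    with hF
  have hright : ∀ x : FreeGroup α, (F x).right = φ x := by
    intro x
    have : (SemidirectProduct.rightHom.comp F : FreeGroup α →* G) = φ := by
      apply FreeGroup.ext_hom
      intro a
      simp [hF]
    exact DFunLike.congr_fun this x
  set d₀ : FreeGroup α → E := fun x => (φ x)⁻¹ • (F x).left with hd₀
  have hmul : ∀ x y : FreeGroup α, d₀ (x * y) = ((φ y)⁻¹ • d₀ x) * d₀ y := by
    intro x y
    have hm : (F (x * y)).left = (F x).left * A (F x).right (F y).left := by
      rw [map_mul]; rfl
    show (φ (x * y))⁻¹ • (F (x * y)).left =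
      ((φ y)⁻¹ • ((φ x)⁻¹ • (F x).left)) * ((φ y)⁻¹ • (F y).left)
    rw [hm, hright, map_mul]
    show (φ x * φ y)⁻¹ • ((F x).left * φ x • (F y).left) = _
    rw [smul_mul', mul_inv_rev, mul_smul, mul_smul, inv_smul_smul]
  have hof : ∀ a : α, d₀ (FreeGroup.of a) = v a := by
    intro a
    have h1 : F (FreeGroup.of a) =
        (⟨φ (FreeGroup.of a) • v a, φ (FreeGroup.of a)⟩ : E ⋊[A] G) :=
      FreeGroup.lift_apply_of
    show (φ (FreeGroup.of a))⁻¹ • (F (FreeGroup.of a)).left = v a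
    rw [h1]
    exact inv_smul_smul _ _
  refine ⟨d₀, ⟨hmul, hof⟩, ?_⟩
  rintro d ⟨hc, hv⟩
  funext x
  induction x using FreeGroup.induction_on with
  | C1 => rw [fgDeriv_one φ hc, fgDeriv_one φ hmul]
  | of a => exact (hv a).trans (hof a).symm
  | inv_of a ih => rw [fgDeriv_inv φ hc, fgDeriv_inv φ hmul, ih]
  | mul x y ihx ihy => rw [hc x y, hmul x y, ihx, ihy]
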